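/- Suppose c : Ω × ℝ → ℝ is measurable, θ ∈ L¹(Ω,μ), and 𝔼_μ[|c(·,z) − θ|] → 0 as |z| → ∞, with |c| ≤ M uniformly. Let g : ℝ → ℝ be continuous with |g(z)| ≤ min(1,z²) and ν(dz) = |z|^{-(1+α)}dz for α ∈ (0,2). Then G^ε(ω) := ∫_ℝ g(z)·c(ω, z/ε) ν(dz) converges in L¹(Ω,μ) to θ(ω)·∫_ℝ g(z) ν(dz) as ε → 0. -/

import Mathlib

open MeasureTheory Filter Set
open scoped ENNReal Topology

-- Step 1: integrability of the dominating density
lemma aux_integrable_min {α : ℝ} (hα : 0 < α) (hα' : α < 2) :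
    Integrable (fun z : ℝ => min 1 (z ^ 2) * |z| ^ (-(1 + α))) volume := by
  set β : ℝ := -(1 + α) with hβ
  have hβ1 : β < -1 := by simp [hβ]; linarith
  have hβ2 : (-1 : ℝ) < 2 + β := by simp [hβ]; linarith
  have hmeas : Measurable (fun z : ℝ => min 1 (z ^ 2) * |z| ^ β) := by
    exact ((measurable_const.min (measurable_id.pow_const 2)).mul
      (measurable_id.abs.pow measurable_const))
  have hIoi : IntegrableOn (fun z : ℝ => min 1 (z ^ 2) * |z| ^ β) (Ioi 0) := by
    rw [← Ioo_union_Ici_eq_Ioi (zero_lt_one (α := ℝ))]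
    apply IntegrableOn.union
    · have base : IntegrableOn (fun z : ℝ => z ^ (2 + β)) (Ioo 0 1) :=
        (intervalIntegral.integrableOn_Ioo_rpow_iff zero_lt_one).2 hβ2
      apply base.mono' (hmeas.aestronglyMeasurable.restrict)
      filter_upwards [ae_restrict_mem measurableSet_Ioo] with z hz
      have hz0 : (0:ℝ) < z := hz.1
      have h1 : min 1 (z ^ 2) * |z| ^ β ≤ z ^ (2 + β) := by
        rw [abs_of_pos hz0, Real.rpow_add hz0, ← Real.rpow_natCast z 2]
        push_cast
        exact mul_le_mul_of_nonneg_right (min_le_right _ _)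
          (Real.rpow_nonneg hz0.le _) |>.trans_eq rfl
      rw [Real.norm_eq_abs, abs_of_nonneg (mul_nonneg (le_min zero_le_one (sq_nonneg z))
        (Real.rpow_nonneg (abs_nonneg z) β))]
      exact h1
    · rw [integrableOn_Ici_iff_integrableOn_Ioi]
      have base : IntegrableOn (fun z : ℝ => z ^ β) (Ioi 1) :=
        integrableOn_Ioi_rpow_of_lt hβ1 zero_lt_one
      apply base.mono' (hmeas.aestronglyMeasurable.restrict)
      filter_upwards [ae_restrict_mem measurableSet_Ioi] with z hz
      have hz0 : (0:ℝ) < z := lt_trans zero_lt_one hz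
      rw [Real.norm_eq_abs, abs_of_nonneg (mul_nonneg (le_min zero_le_one (sq_nonneg z))
        (Real.rpow_nonneg (abs_nonneg z) β)), abs_of_pos hz0]
      calc min 1 (z ^ 2) * z ^ β ≤ 1 * z ^ β :=
            mul_le_mul_of_nonneg_right (min_le_left _ _) (Real.rpow_nonneg hz0.le _)
        _ = z ^ β := one_mul _
  have hIio : IntegrableOn (fun z : ℝ => min 1 (z ^ 2) * |z| ^ β) (Iio 0) := by
    have hmap : Measure.map Neg.neg (volume.restrict (Ioi (0:ℝ))) = volume.restrict (Iio 0) := by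
      have : (Neg.neg ⁻¹' (Iio (0:ℝ))) = Ioi 0 := by ext x; simp
      rw [show (Ioi (0:ℝ)) = Neg.neg ⁻¹' (Iio (0:ℝ)) from this.symm,
        ← Measure.restrict_map measurable_neg measurableSet_Iio,
        Measure.map_neg_eq_self]
    have hemb : MeasurableEmbedding (Neg.neg : ℝ → ℝ) :=
      (Homeomorph.neg ℝ).measurableEmbedding
    unfold IntegrableOn
    rw [← hmap, hemb.integrable_map_iff]
    have : ((fun z : ℝ => min 1 (z ^ 2) * |z| ^ β) ∘ Neg.neg)
        = fun z : ℝ => min 1 (z ^ 2) * |z| ^ β := by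
      funext z; simp [Function.comp, neg_sq]
    rw [this]
    exact hIoi
  rw [← integrableOn_univ, ← Iio_union_Ici (a := (0:ℝ))]
  apply hIio.union
  rw [integrableOn_Ici_iff_integrableOn_Ioi]
  exact hIoi

/-- If the kernel `c(·,z)` converges in `L¹(μ)` to `θ` as `|z| → ∞` and `g` is continuous
with `|g(z)| ≤ min(1,z²)`, then `G^ε(ω) = ∫ g(z) c(ω, z/ε) dν(z)` converges in `L¹(μ)`
to `θ(ω) ∫ g dν` as `ε → 0⁺`, where `ν(dz) = |z|^{-(1+α)}dz`. -/
theorem kernel_averaged_convergence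
    {Ω : Type*} [MeasurableSpace Ω] (μ : Measure Ω) [IsProbabilityMeasure μ]
    (α : ℝ) (hα : 0 < α) (hα' : α < 2)
    (ν : Measure ℝ)
    (hν : ν = volume.withDensity fun z => ENNReal.ofReal (|z| ^ (-(1 + α))))
    (c : Ω × ℝ → ℝ) (hc : Measurable c) (M : ℝ) (hM : ∀ p, |c p| ≤ M)
    (θ : Ω → ℝ) (hθ : Integrable θ μ)
    (hconv : Tendsto (fun z : ℝ => ∫ ω, |c (ω, z) - θ ω| ∂μ)
      (Filter.cocompact ℝ) (𝓝 0))
    (g : ℝ → ℝ) (hg : Continuous g) (hgbound : ∀ z, |g z| ≤ min 1 (z ^ 2)) :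
    Tendsto (fun ε : ℝ =>
        ∫ ω, |(∫ z, g z * c (ω, z / ε) ∂ν) - θ ω * ∫ z, g z ∂ν| ∂μ)
      (𝓝[>] (0 : ℝ)) (𝓝 0) := by
  subst hν
  set ν : Measure ℝ := volume.withDensity fun z => ENNReal.ofReal (|z| ^ (-(1 + α))) with hνdef
  haveI hσ : SigmaFinite ν :=
    SigmaFinite.withDensity_of_ne_top (ae_of_all _ fun x => ENNReal.ofReal_ne_top)
  have hdmeas : Measurable fun z : ℝ => ENNReal.ofReal (|z| ^ (-(1 + α))) :=
    (measurable_id.abs.pow measurable_const).ennreal_ofReal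
  -- integrability criterion over ν
  have hIntν : ∀ (K : ℝ) (G : ℝ → ℝ), Measurable G →
      (∀ z, |G z| ≤ K * min 1 (z ^ 2)) → Integrable G ν := by
    intro K G hGmeas hGbd
    rw [hνdef, integrable_withDensity_iff hdmeas (ae_of_all _ fun x => ENNReal.ofReal_lt_top)]
    apply ((aux_integrable_min hα hα').const_mul K).mono'
      ((hGmeas.mul (hdmeas.ennreal_toReal)).aestronglyMeasurable)
    refine ae_of_all _ fun z => ?_
    have h0 : (ENNReal.ofReal (|z| ^ (-(1 + α)))).toReal = |z| ^ (-(1 + α)) :=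
      ENNReal.toReal_ofReal (Real.rpow_nonneg (abs_nonneg z) _)
    simp only [Pi.mul_apply]
    rw [Real.norm_eq_abs, abs_mul, h0, abs_of_nonneg (Real.rpow_nonneg (abs_nonneg z) _)]
    calc |G z| * |z| ^ (-(1 + α)) ≤ (K * min 1 (z ^ 2)) * |z| ^ (-(1 + α)) :=
          mul_le_mul_of_nonneg_right (hGbd z) (Real.rpow_nonneg (abs_nonneg z) _)
      _ = K * (min 1 (z ^ 2) * |z| ^ (-(1 + α))) := by ring
  have habs_int : Integrable (fun z => |g z|) ν :=
    hIntν 1 _ hg.measurable.abs (fun z => by simpa [abs_abs] using hgbound z)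
  have hg_int : Integrable g ν := hIntν 1 g hg.measurable (fun z => by simpa using hgbound z)
  -- the measurable version of θ
  set θ' : Ω → ℝ := hθ.1.mk θ with hθ'def
  have hθ'sm : StronglyMeasurable θ' := hθ.1.stronglyMeasurable_mk
  have hθθ' : θ =ᵐ[μ] θ' := hθ.1.ae_eq_mk
  -- the L¹ distance function h
  set h : ℝ → ℝ := fun w => ∫ ω, |c (ω, w) - θ ω| ∂μ with hhdef
  have hh' : h = fun w => ∫ ω, |c (ω, w) - θ' ω| ∂μ := by
    funext w
    exact integral_congr_ae (hθθ'.mono fun ω e => by dsimp only; rw [e])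
  have h_meas : StronglyMeasurable h := by
    rw [hh']
    apply StronglyMeasurable.integral_prod_right
      (f := fun (w : ℝ) (ω : Ω) => |c (ω, w) - θ' ω|)
    exact (((hc.comp (measurable_snd.prodMk measurable_fst)).sub
      (hθ'sm.measurable.comp measurable_snd)).abs).stronglyMeasurable
  have h_nonneg : ∀ w, 0 ≤ h w := fun w => integral_nonneg fun ω => abs_nonneg _
  set C : ℝ := M + ∫ ω, |θ ω| ∂μ with hCdef
  have hc_int : ∀ w : ℝ, Integrable (fun ω => c (ω, w)) μ := by
    intro w
    apply (integrable_const M).mono'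
      ((hc.comp (measurable_id.prodMk measurable_const)).aestronglyMeasurable)
    exact ae_of_all _ fun ω => by simpa [Real.norm_eq_abs] using hM (ω, w)
  have h_bound : ∀ w, h w ≤ C := by
    intro w
    rw [hhdef, hCdef]
    have : (M + ∫ ω, |θ ω| ∂μ) = ∫ ω, (M + |θ ω|) ∂μ := by
      rw [integral_add (integrable_const M) hθ.abs, integral_const]
      simp
    rw [this]
    apply integral_mono ((hc_int w).sub hθ).abs ((integrable_const M).add hθ.abs)
    intro ω
    calc |c (ω, w) - θ ω| ≤ |c (ω, w)| + |θ ω| := abs_sub _ _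
      _ ≤ M + |θ ω| := add_le_add_left (hM _) _
  -- the pointwise bound on the difference
  have key1 : ∀ (ε : ℝ) (ω : Ω),
      |(∫ z, g z * c (ω, z / ε) ∂ν) - θ ω * ∫ z, g z ∂ν|
        ≤ ∫ z, |g z| * |c (ω, z / ε) - θ ω| ∂ν := by
    intro ε ω
    have hgc : Integrable (fun z => g z * c (ω, z / ε)) ν := by
      apply hIntν M _ (hg.measurable.mul (hc.comp (measurable_const.prodMk
        (measurable_id.div_const ε))))
      intro z
      simp only [Pi.mul_apply, Function.comp_apply]
      rw [abs_mul]
      calc |g z| * |c (ω, z / ε)| ≤ min 1 (z ^ 2) * M :=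
            mul_le_mul (hgbound z) (hM _) (abs_nonneg _)
              (le_min zero_le_one (sq_nonneg z))
        _ = M * min 1 (z ^ 2) := mul_comm _ _
    have hgθ : Integrable (fun z => g z * θ ω) ν := hg_int.mul_const _
    have e1 : θ ω * ∫ z, g z ∂ν = ∫ z, g z * θ ω ∂ν := by
      rw [integral_mul_const]; ring
    rw [e1, ← integral_sub hgc hgθ]
    have e2 : (fun z => g z * c (ω, z / ε) - g z * θ ω)
        = fun z => g z * (c (ω, z / ε) - θ ω) := by funext z; ring
    rw [e2]
    simpa [Real.norm_eq_abs, abs_mul] using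
      norm_integral_le_integral_norm (fun z => g z * (c (ω, z / ε) - θ ω)) (μ := ν)
  -- product integrability for each ε
  have keyprod : ∀ ε : ℝ, Integrable
      (fun p : Ω × ℝ => |g p.2| * |c (p.1, p.2 / ε) - θ p.1|) (μ.prod ν) := by
    intro ε
    have hbd_int : Integrable (fun p : Ω × ℝ => (M + |θ p.1|) * |g p.2|) (μ.prod ν) :=
      Integrable.mul_prod ((integrable_const M).add hθ.abs) habs_int
    apply hbd_int.mono'
    · have h1 : AEStronglyMeasurable (fun p : Ω × ℝ => θ p.1) (μ.prod ν) := hθ.1.comp_fst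
      have h2 : Measurable (fun p : Ω × ℝ => c (p.1, p.2 / ε)) :=
        hc.comp (measurable_fst.prodMk (measurable_snd.div_const ε))
      have h3 : AEStronglyMeasurable (fun p : Ω × ℝ => |c (p.1, p.2 / ε) - θ p.1|)
          (μ.prod ν) := by
        simpa [Real.norm_eq_abs] using (h2.aestronglyMeasurable.sub h1).norm
      exact (hg.measurable.abs.comp measurable_snd).aestronglyMeasurable.mul h3
    · refine ae_of_all _ fun p => ?_
      rw [Real.norm_eq_abs, abs_of_nonneg (mul_nonneg (abs_nonneg _) (abs_nonneg _))]
      calc |g p.2| * |c (p.1, p.2 / ε) - θ p.1|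
          ≤ |g p.2| * (M + |θ p.1|) := by
            apply mul_le_mul_of_nonneg_left _ (abs_nonneg _)
            calc |c (p.1, p.2 / ε) - θ p.1| ≤ |c (p.1, p.2 / ε)| + |θ p.1| := abs_sub _ _
              _ ≤ M + |θ p.1| := add_le_add_left (hM _) _
        _ = (M + |θ p.1|) * |g p.2| := mul_comm _ _
  -- Fubini: the double integral equals ∫ |g z| * h (z/ε)
  have keyswap : ∀ ε : ℝ,
      ∫ ω, (∫ z, |g z| * |c (ω, z / ε) - θ ω| ∂ν) ∂μ
        = ∫ z, |g z| * h (z / ε) ∂ν := by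
    intro ε
    rw [integral_integral_swap (f := fun (ω : Ω) (z : ℝ) => |g z| * |c (ω, z / ε) - θ ω|)
      (keyprod ε)]
    congr 1
    funext z
    rw [hhdef, integral_const_mul]
  -- the dominating convergence
  have hB : Tendsto (fun ε : ℝ => ∫ z, |g z| * h (z / ε) ∂ν) (𝓝[>] (0:ℝ)) (𝓝 0) := by
    have h0 : (0:ℝ) = ∫ z : ℝ, (0:ℝ) ∂ν := by simp
    rw [h0]
    apply tendsto_integral_filter_of_dominated_convergence (fun z => |g z| * C)
    · refine Eventually.of_forall fun ε => ?_
      exact (hg.measurable.abs.mul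
        (h_meas.measurable.comp (measurable_id.div_const ε))).aestronglyMeasurable
    · refine Eventually.of_forall fun ε => ae_of_all _ fun z => ?_
      rw [Real.norm_eq_abs, abs_of_nonneg (mul_nonneg (abs_nonneg _) (h_nonneg _))]
      exact mul_le_mul_of_nonneg_left (h_bound _) (abs_nonneg _)
    · exact habs_int.mul_const C
    · have hne : ∀ᵐ z ∂ν, z ≠ 0 := by
        rw [ae_iff]
        have : {z : ℝ | ¬ z ≠ 0} = {(0:ℝ)} := by ext z; simp
        rw [this]
        exact (withDensity_absolutelyContinuous volume _) (measure_singleton 0)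
      filter_upwards [hne] with z hz
      have hzc : Tendsto (fun ε : ℝ => z / ε) (𝓝[>] (0:ℝ)) (cocompact ℝ) := by
        rw [cocompact_eq_atBot_atTop]
        have hinv : Tendsto (fun ε : ℝ => ε⁻¹) (𝓝[>] (0:ℝ)) atTop := tendsto_inv_nhdsGT_zero
        rcases hz.lt_or_gt with hneg | hpos
        · have : Tendsto (fun ε : ℝ => z * ε⁻¹) (𝓝[>] (0:ℝ)) atBot :=
            hinv.const_mul_atTop_of_neg hneg
          simpa [div_eq_mul_inv] using this.mono_right le_sup_left
        · have : Tendsto (fun ε : ℝ => z * ε⁻¹) (𝓝[>] (0:ℝ)) atTop :=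
            hinv.const_mul_atTop hpos
          simpa [div_eq_mul_inv] using this.mono_right le_sup_right
      have := hconv.comp hzc
      have h2 : Tendsto (fun ε : ℝ => |g z| * h (z / ε)) (𝓝[>] (0:ℝ)) (𝓝 (|g z| * 0)) :=
        Tendsto.const_mul _ this
      simpa using h2
  -- final squeeze
  apply squeeze_zero' (g := fun ε : ℝ => ∫ z, |g z| * h (z / ε) ∂ν)
  · exact Eventually.of_forall fun ε => integral_nonneg fun ω => abs_nonneg _
  · refine Eventually.of_forall fun ε => ?_
    rw [← keyswap ε]
    apply integral_mono_of_nonneg (ae_of_all _ fun ω => abs_nonneg _)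
      ((keyprod ε).integral_prod_left)
    exact ae_of_all _ fun ω => key1 ε ω
  · exact hB
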